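/- Let Φ : ℝ → [0,∞) be a differentiable N-function satisfying the Δ₂ condition globally. Let F : ℝ⁶ → [0,∞) be convex and of class C¹ with F(0) = 0, and write f = F' (the gradient of F). Assume f(u) = o(|u|) as u → 0 and that there exists c₁ > 0 with |f(u)| ≤ c₁·(1 + Φ'(|u|)) for all u ∈ ℝ⁶. Then for every ε > 0 there exists C_ε > 0 such that F(u) ≤ ε·|u|² + C_ε·Φ(|u|) for every u ∈ ℝ⁶. -/

import Mathlib

open Filter

/-- An *N*-function: even, convex, nonnegative, positive away from zero,
with `Φ t / t → 0` at `0` and `Φ t / t → ∞` at `∞`. -/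
def IsNFunction (Φ : ℝ → ℝ) : Prop :=
  (∀ t, 0 ≤ Φ t) ∧ (∀ t, Φ (-t) = Φ t) ∧ ConvexOn ℝ Set.univ Φ ∧
  (∀ t, 0 < t → 0 < Φ t) ∧
  Tendsto (fun t => Φ t / t) (nhdsWithin (0 : ℝ) {0}ᶜ) (nhds 0) ∧
  Tendsto (fun t => Φ t / t) atTop atTop

/-- The global Δ₂ condition. -/
def Delta2 (Φ : ℝ → ℝ) : Prop := ∃ K > 0, ∀ t : ℝ, Φ (2 * t) ≤ K * Φ t

/-- The global ∇₂ condition. -/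
def Nabla2 (Φ : ℝ → ℝ) : Prop := ∃ K > 1, ∀ t : ℝ, 2 * K * Φ t ≤ Φ (K * t)

/-- The complementary function `Ψ t = sup { s * |t| - Φ s : s ≥ 0 }`. -/
noncomputable def complFn (Φ : ℝ → ℝ) (t : ℝ) : ℝ :=
  sSup ((fun s => s * |t| - Φ s) '' Set.Ici (0 : ℝ))

open Asymptotics

/-- Assumptions (F0)-(F2) imply the estimate `F u ≤ ε |u|² + C_ε Φ(|u|)`. -/
theorem stmt11 (Φ : ℝ → ℝ) (hN : IsNFunction Φ) (hΦdiff : Differentiable ℝ Φ)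
    (hΔ : Delta2 Φ)
    (F : EuclideanSpace ℝ (Fin 6) → ℝ) (hFpos : ∀ u, 0 ≤ F u)
    (hFconv : ConvexOn ℝ Set.univ F) (hFC1 : ContDiff ℝ 1 F) (hF0 : F 0 = 0)
    (hlittle : (fun u => fderiv ℝ F u) =o[nhds 0] (fun u : EuclideanSpace ℝ (Fin 6) => u))
    (c₁ : ℝ) (hc₁ : 0 < c₁)
    (hgrowth : ∀ u, ‖fderiv ℝ F u‖ ≤ c₁ * (1 + deriv Φ ‖u‖)) :
    ∀ ε > 0, ∃ C > 0, ∀ u, F u ≤ ε * ‖u‖ ^ 2 + C * Φ ‖u‖ := by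
  obtain ⟨hΦpos, hΦeven, hΦconv, hΦpos', hΦ0lim, hΦtop⟩ := hN
  obtain ⟨K, hK, hKΔ⟩ := hΔ
  -- Φ 0 = 0
  have hΦ0 : Φ 0 = 0 := by
    have h1 : Tendsto Φ (nhdsWithin (0:ℝ) {0}ᶜ) (nhds (Φ 0)) :=
      (hΦdiff.continuous.tendsto 0).mono_left nhdsWithin_le_nhds
    have h2 : Tendsto Φ (nhdsWithin (0:ℝ) {0}ᶜ) (nhds 0) := by
      have hid : Tendsto (fun t : ℝ => t) (nhdsWithin (0:ℝ) {0}ᶜ) (nhds 0) :=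
        tendsto_id.mono_left nhdsWithin_le_nhds
      have := hΦ0lim.mul hid
      rw [zero_mul] at this
      refine this.congr' ?_
      filter_upwards [self_mem_nhdsWithin] with t ht
      exact div_mul_cancel₀ _ ht
    exact tendsto_nhds_unique h1 h2
  -- the gradient inequality for F
  have hFd : Differentiable ℝ F := hFC1.differentiable one_ne_zero
  have hkey : ∀ u, F u ≤ ‖fderiv ℝ F u‖ * ‖u‖ := by
    intro u
    set g : ℝ → ℝ := fun t => F (t • u) with hg
    have hgconv : ConvexOn ℝ Set.univ g := by
      have := hFconv.comp_affineMap (((LinearMap.id : ℝ →ₗ[ℝ] ℝ).smulRight u).toAffineMap)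
      simp at this; exact this
    have hd : HasDerivAt g (fderiv ℝ F u u) 1 := by
      have h1 : HasDerivAt (fun t : ℝ => t • u) u 1 := by
        simpa using (hasDerivAt_id (1:ℝ)).smul_const u
      have := (hFd (1 • u)).hasFDerivAt.comp_hasDerivAt 1 h1
      simp at this; exact this
    have := hgconv.slope_le_of_hasDerivAt (Set.mem_univ 0) (Set.mem_univ 1) one_pos hd
    have hslope : slope g 0 1 = F u := by
      simp [slope_def_field, hg, hF0]
    rw [hslope] at this
    calc F u ≤ fderiv ℝ F u u := this
      _ ≤ ‖fderiv ℝ F u u‖ := le_abs_self _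
      _ ≤ ‖fderiv ℝ F u‖ * ‖u‖ := (fderiv ℝ F u).le_opNorm u
  intro ε hε
  -- small-ball bound from the little-o hypothesis
  have hev : ∀ᶠ u : EuclideanSpace ℝ (Fin 6) in nhds 0, ‖fderiv ℝ F u‖ ≤ ε * ‖u‖ :=
    hlittle.def hε
  obtain ⟨δ, hδ, hball⟩ := Metric.eventually_nhds_iff.mp hev
  set δ' : ℝ := δ / 2 with hδ'def
  have hδ' : 0 < δ' := by positivity
  have hΦδ' : 0 < Φ δ' := hΦpos' δ' hδ'
  refine ⟨c₁ * δ' / Φ δ' + c₁ * K + 1, by positivity, fun u => ?_⟩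
  by_cases hcase : ‖u‖ < δ'
  · -- small u : use the little-o bound
    have hb : ‖fderiv ℝ F u‖ ≤ ε * ‖u‖ := by
      apply hball
      rw [dist_zero_right]
      calc ‖u‖ < δ' := hcase
        _ < δ := by rw [hδ'def]; linarith
    have : F u ≤ ε * ‖u‖ ^ 2 := by
      calc F u ≤ ‖fderiv ℝ F u‖ * ‖u‖ := hkey u
        _ ≤ (ε * ‖u‖) * ‖u‖ := by
            apply mul_le_mul_of_nonneg_right hb (norm_nonneg _)
        _ = ε * ‖u‖ ^ 2 := by ring
    have h2 : 0 ≤ (c₁ * δ' / Φ δ' + c₁ * K + 1) * Φ ‖u‖ := by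
      have := hΦpos ‖u‖
      positivity
    linarith
  · -- large u : use the growth bound
    push_neg at hcase
    set t : ℝ := ‖u‖ with htdef
    have ht : 0 < t := lt_of_lt_of_le hδ' hcase
    -- t ≤ (δ' / Φ δ') * Φ t
    have hlin : t ≤ δ' / Φ δ' * Φ t := by
      have hle1 : δ' / t ≤ 1 := (div_le_one ht).mpr hcase
      have hconv := hΦconv.2 (Set.mem_univ t) (Set.mem_univ 0)
        (show (0:ℝ) ≤ δ' / t by positivity)
        (show (0:ℝ) ≤ 1 - δ' / t by linarith)
        (by ring)
      simp only [smul_eq_mul, mul_zero, add_zero, hΦ0] at hconv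
      have h1 : δ' / t * t = δ' := div_mul_cancel₀ _ ht.ne'
      rw [h1] at hconv
      -- hconv : Φ δ' ≤ δ' / t * Φ t
      rw [← sub_nonneg]
      have : 0 ≤ (δ' / Φ δ' * Φ t - t) * (Φ δ' / t) := by
        have hexp : (δ' / Φ δ' * Φ t - t) * (Φ δ' / t) = δ' / t * Φ t - Φ δ' := by
          field_simp
        rw [hexp]; linarith
      have h2 : 0 < Φ δ' / t := by positivity
      exact nonneg_of_mul_nonneg_right (by linarith [this] : 0 ≤ Φ δ' / t * (δ' / Φ δ' * Φ t - t)) h2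
    -- deriv Φ t * t ≤ K * Φ t
    have hderiv : deriv Φ t * t ≤ K * Φ t := by
      have hsl := hΦconv.deriv_le_slope (Set.mem_univ t) (Set.mem_univ (2 * t))
        (by linarith) (hΦdiff t)
      have hslope : slope Φ t (2 * t) = (Φ (2 * t) - Φ t) / t := by
        rw [slope_def_field]; ring_nf
      rw [hslope] at hsl
      have := mul_le_mul_of_nonneg_right hsl ht.le
      rw [div_mul_cancel₀ _ ht.ne'] at this
      have hK2 : Φ (2 * t) ≤ K * Φ t := hKΔ t
      have := hΦpos t
      linarith
    have hgu := hgrowth u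
    calc F u ≤ ‖fderiv ℝ F u‖ * ‖u‖ := hkey u
      _ ≤ c₁ * (1 + deriv Φ t) * t :=
          mul_le_mul_of_nonneg_right hgu (norm_nonneg _)
      _ = c₁ * t + c₁ * (deriv Φ t * t) := by ring
      _ ≤ c₁ * (δ' / Φ δ' * Φ t) + c₁ * (K * Φ t) := by
          have h1 := mul_le_mul_of_nonneg_left hlin hc₁.le
          have h2 := mul_le_mul_of_nonneg_left hderiv hc₁.le
          linarith
      _ = (c₁ * δ' / Φ δ' + c₁ * K) * Φ t := by ring
      _ ≤ ε * ‖u‖ ^ 2 + (c₁ * δ' / Φ δ' + c₁ * K + 1) * Φ ‖u‖ := by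
          have h1 : 0 ≤ ε * ‖u‖ ^ 2 := by positivity
          have h2 := hΦpos t
          rw [← htdef]
          nlinarith
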